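/- Let W be a finite set, inv : W → W a map, d ≥ 1 an integer, h : W × W × W → ℤ a family of integers, and for each w ∈ W let ρ(w) be a d×d matrix with rational entries, all of which are integers. Assume: (i) ρ(x)·ρ(y) = Σ_{z∈W} h(x,y,z)·ρ(z) for all x,y ∈ W; (ii) h(y, inv(x), z) = h(z, x, y) for all x,y,z ∈ W; (iii) there is a nonzero integer f such that the Schur relations with Schur element f hold: for all indices s,t,u,v ∈ {1,…,d}, Σ_{w∈W} ρ(w)_{s,t}·ρ(inv(w))_{u,v} equals f if s=v and t=u, and equals 0 otherwise. Then there exists a symmetric d×d integer matrix B which is positive definite (vᵀ·B·v > 0 for every nonzero v ∈ ℚ^d) such that B·ρ(inv(w)) = ρ(w)ᵀ·B for every w ∈ W, and every prime number dividing det(B) divides f. -/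

import Mathlib

open Matrix

section AuxGeck

variable {R : Type*} [CommRing R] {m W : Type*} [Fintype m] [Fintype W]

private lemma auxGeck_sum_mulVec (M : W → Matrix m m R) (v : m → R) :
    (∑ w : W, M w) *ᵥ v = ∑ w : W, M w *ᵥ v := by
  funext i
  simp only [Matrix.mulVec, dotProduct, Finset.sum_apply, Matrix.sum_apply,
    Finset.sum_mul]
  exact Finset.sum_comm

private lemma auxGeck_dotProduct_sum (v : m → R) (u : W → m → R) :
    v ⬝ᵥ (∑ w : W, u w) = ∑ w : W, v ⬝ᵥ u w := by
  simp only [dotProduct, Finset.sum_apply, Finset.mul_sum]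
  exact Finset.sum_comm

private lemma auxGeck_gram (A : Matrix m m R) (v : m → R) :
    v ⬝ᵥ ((Aᵀ * A) *ᵥ v) = (A *ᵥ v) ⬝ᵥ (A *ᵥ v) := by
  rw [← Matrix.mulVec_mulVec, Matrix.dotProduct_mulVec, Matrix.vecMul_transpose]

private lemma auxGeck_swap (a : W → R) (b : m → R) (c : W → m → m → R) (v : m → R) :
    ∑ j : m, b j * (∑ k : m, (∑ w : W, a w * c w j k) * v k)
      = ∑ w : W, a w * (∑ j : m, b j * (∑ k : m, c w j k * v k)) := by
  have l1 : ∑ j : m, b j * (∑ k : m, (∑ w : W, a w * c w j k) * v k)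
      = ∑ j : m, ∑ k : m, ∑ w : W, b j * (a w * c w j k * v k) := by
    simp only [Finset.mul_sum, Finset.sum_mul]
  have l2 : ∑ w : W, a w * (∑ j : m, b j * (∑ k : m, c w j k * v k))
      = ∑ w : W, ∑ j : m, ∑ k : m, a w * (b j * (c w j k * v k)) := by
    simp only [Finset.mul_sum, Finset.sum_mul]
  rw [l1, l2]
  calc ∑ j : m, ∑ k : m, ∑ w : W, b j * (a w * c w j k * v k)
      = ∑ j : m, ∑ w : W, ∑ k : m, b j * (a w * c w j k * v k) :=
        Finset.sum_congr rfl fun j _ => Finset.sum_comm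
    _ = ∑ w : W, ∑ j : m, ∑ k : m, b j * (a w * c w j k * v k) := Finset.sum_comm
    _ = ∑ w : W, ∑ j : m, ∑ k : m, a w * (b j * (c w j k * v k)) := by
        refine Finset.sum_congr rfl fun w _ => Finset.sum_congr rfl fun j _ =>
          Finset.sum_congr rfl fun k _ => by ring

end AuxGeck

/-- Coordinate form of Proposition 2.6 of Geck, "Hecke algebras of finite type are
cellular": an integral matrix representation of a ring with symmetric structure
constants satisfying the Schur relations with Schur element `f` admits a symmetric,
positive-definite integral intertwining matrix `B` whose determinant is divisible
only by primes dividing `f`. -/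
theorem stmt_0 (W : Type) [Fintype W] (inv : W → W)
    (d : ℕ) (hd : 1 ≤ d) (h : W × W × W → ℤ)
    (ρ : W → Matrix (Fin d) (Fin d) ℚ)
    (hint : ∀ (w : W) (i j : Fin d), ∃ n : ℤ, ρ w i j = (n : ℚ))
    (hmul : ∀ x y : W, ρ x * ρ y = ∑ z : W, (h (x, y, z) : ℚ) • ρ z)
    (hsym : ∀ x y z : W, h (y, inv x, z) = h (z, x, y))
    (f : ℤ) (hf : f ≠ 0)
    (hschur : ∀ s t u v : Fin d,
      ∑ w : W, ρ w s t * ρ (inv w) u v = if s = v ∧ t = u then (f : ℚ) else 0) :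
    ∃ B : Matrix (Fin d) (Fin d) ℤ, B.IsSymm ∧
      (∀ v : Fin d → ℚ, v ≠ 0 →
        0 < dotProduct v ((B.map (Int.cast : ℤ → ℚ)) *ᵥ v)) ∧
      (∀ w : W, (B.map (Int.cast : ℤ → ℚ)) * ρ (inv w) =
        (ρ w)ᵀ * (B.map (Int.cast : ℤ → ℚ))) ∧
      (∀ p : ℕ, p.Prime → (p : ℤ) ∣ B.det → (p : ℤ) ∣ f) := by
  classical
  choose n hn using hint
  set t0 : Fin d := ⟨0, hd⟩ with ht0
  -- kernel lemma over ℚ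
  have hker : ∀ v : Fin d → ℚ, (∀ w : W, ρ w *ᵥ v = 0) → v = 0 := by
    intro v hv
    funext s
    have key : ∀ k : Fin d,
        (∑ w : W, ρ w s t0 * ρ (inv w) t0 k) = if s = k then (f : ℚ) else 0 := by
      intro k
      rw [hschur s t0 t0 k]
      simp
    have h1 : (f : ℚ) * v s = ∑ w : W, ρ w s t0 * ((ρ (inv w)) *ᵥ v) t0 := by
      calc (f : ℚ) * v s = ∑ k : Fin d, (if s = k then (f : ℚ) else 0) * v k := by
            simp [ite_mul]
        _ = ∑ k : Fin d, (∑ w : W, ρ w s t0 * ρ (inv w) t0 k) * v k := by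
            refine Finset.sum_congr rfl fun k _ => by rw [key]
        _ = ∑ w : W, ∑ k : Fin d, ρ w s t0 * (ρ (inv w) t0 k * v k) := by
            simp only [Finset.sum_mul, mul_assoc]
            exact Finset.sum_comm
        _ = ∑ w : W, ρ w s t0 * ((ρ (inv w)) *ᵥ v) t0 := by
            simp [Matrix.mulVec, dotProduct, Finset.mul_sum]
    have h2 : (f : ℚ) * v s = 0 := by
      rw [h1]
      refine Finset.sum_eq_zero fun w _ => ?_
      rw [hv (inv w)]
      simp
    have hf' : (f : ℚ) ≠ 0 := Int.cast_ne_zero.mpr hf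
    simpa [hf'] using mul_eq_zero.mp h2
  -- ℚ-level Gram matrix
  set Pq : Matrix (Fin d) (Fin d) ℚ := ∑ w : W, (ρ w)ᵀ * ρ w with hPq
  have hquad : ∀ v : Fin d → ℚ, v ⬝ᵥ (Pq *ᵥ v) = ∑ w : W, (ρ w *ᵥ v) ⬝ᵥ (ρ w *ᵥ v) := by
    intro v
    rw [hPq, auxGeck_sum_mulVec, auxGeck_dotProduct_sum]
    exact Finset.sum_congr rfl fun w _ => auxGeck_gram _ _
  have hpos : ∀ v : Fin d → ℚ, v ≠ 0 → 0 < v ⬝ᵥ (Pq *ᵥ v) := by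
    intro v hv
    obtain ⟨w0, hw0⟩ : ∃ w : W, ρ w *ᵥ v ≠ 0 := by
      by_contra hcon
      push_neg at hcon
      exact hv (hker v hcon)
    rw [hquad]
    refine Finset.sum_pos' (fun w _ => Finset.sum_nonneg fun t _ => mul_self_nonneg _)
      ⟨w0, Finset.mem_univ _, ?_⟩
    obtain ⟨t, ht⟩ := Function.ne_iff.mp hw0
    exact Finset.sum_pos' (fun t _ => mul_self_nonneg _)
      ⟨t, Finset.mem_univ _, mul_self_pos.mpr (by simpa using ht)⟩
  -- intertwiner over ℚ
  have hintq : ∀ w : W, Pq * ρ (inv w) = (ρ w)ᵀ * Pq := by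
    intro w
    have lhs : Pq * ρ (inv w) = ∑ x : W, ∑ z : W, (h (z, w, x) : ℚ) • ((ρ x)ᵀ * ρ z) := by
      calc Pq * ρ (inv w) = ∑ x : W, (ρ x)ᵀ * (ρ x * ρ (inv w)) := by
            rw [hPq, Finset.sum_mul]
            exact Finset.sum_congr rfl fun x _ => (Matrix.mul_assoc _ _ _)
        _ = ∑ x : W, (ρ x)ᵀ * (∑ z : W, (h (x, inv w, z) : ℚ) • ρ z) := by
            simp only [hmul]
        _ = ∑ x : W, ∑ z : W, (h (x, inv w, z) : ℚ) • ((ρ x)ᵀ * ρ z) := by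
            simp [Finset.mul_sum, Matrix.mul_smul]
        _ = ∑ x : W, ∑ z : W, (h (z, w, x) : ℚ) • ((ρ x)ᵀ * ρ z) := by
            simp only [hsym]
    have rhs : (ρ w)ᵀ * Pq = ∑ z : W, ∑ x : W, (h (z, w, x) : ℚ) • ((ρ x)ᵀ * ρ z) := by
      calc (ρ w)ᵀ * Pq = ∑ z : W, (ρ z * ρ w)ᵀ * ρ z := by
            rw [hPq, Finset.mul_sum]
            refine Finset.sum_congr rfl fun z _ => ?_
            rw [Matrix.transpose_mul, Matrix.mul_assoc]
        _ = ∑ z : W, (∑ x : W, (h (z, w, x) : ℚ) • ρ x)ᵀ * ρ z := by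
            simp only [hmul]
        _ = ∑ z : W, ∑ x : W, (h (z, w, x) : ℚ) • ((ρ x)ᵀ * ρ z) := by
            simp [Matrix.transpose_sum, Matrix.transpose_smul, Finset.sum_mul, Matrix.smul_mul]
    rw [lhs, rhs, Finset.sum_comm]
  -- integer Gram matrix
  set P : Matrix (Fin d) (Fin d) ℤ := ∑ w : W, (Matrix.of (n w))ᵀ * Matrix.of (n w) with hP
  have hPentry : ∀ i j, P i j = ∑ w : W, ∑ k : Fin d, n w k i * n w k j := by
    intro i j
    simp [hP, Matrix.sum_apply, Matrix.mul_apply]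
  have hPcast : ∀ i j, (P i j : ℚ) = Pq i j := by
    intro i j
    rw [hPentry]
    push_cast
    simp [hPq, Matrix.sum_apply, Matrix.mul_apply, hn]
  have hPsymm : ∀ i j, P j i = P i j := by
    intro i j
    rw [hPentry, hPentry]
    exact Finset.sum_congr rfl fun w _ => Finset.sum_congr rfl fun k _ => mul_comm _ _
  -- gcd normalization
  set g : ℤ := Finset.univ.gcd (fun q : Fin d × Fin d => P q.1 q.2) with hg
  set G : ℤ := |g| with hG
  have hGdvd : ∀ i j, G ∣ P i j := fun i j =>
    (abs_dvd _ _).mpr (Finset.gcd_dvd (Finset.mem_univ (i, j)))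
  set B : Matrix (Fin d) (Fin d) ℤ := Matrix.of (fun i j => P i j / G) with hB
  have hGB : ∀ i j, G * B i j = P i j := fun i j => Int.mul_ediv_cancel' (hGdvd i j)
  -- g is nonzero
  have hgne : g ≠ 0 := by
    intro h0
    have hall : ∀ i j, P i j = 0 := by
      intro i j
      exact Finset.gcd_eq_zero_iff.mp (hg ▸ h0) (i, j) (Finset.mem_univ _)
    have hPq0 : Pq = 0 := by
      ext i j
      rw [← hPcast i j, hall i j]
      simp
    have hvne : (Pi.single t0 1 : Fin d → ℚ) ≠ 0 := by
      intro hc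
      have := congrFun hc t0
      simp at this
    have := hpos _ hvne
    rw [hPq0] at this
    simp at this
  have hGpos : 0 < G := abs_pos.mpr hgne
  have hGne : G ≠ 0 := ne_of_gt hGpos
  have hGq : (0 : ℚ) < (G : ℚ) := by exact_mod_cast hGpos
  have hGqne : (G : ℚ) ≠ 0 := ne_of_gt hGq
  -- relation between B and Pq over ℚ
  have hBqP : (G : ℚ) • (B.map (Int.cast : ℤ → ℚ)) = Pq := by
    ext i j
    have : (G : ℚ) * (B i j : ℚ) = (P i j : ℚ) := by
      rw [← hGB i j]
      push_cast
      ring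
    simp only [Matrix.smul_apply, Matrix.map_apply, smul_eq_mul]
    rw [this, hPcast i j]
  -- intertwiner for B over ℚ
  have hBintQ : ∀ w : W, (B.map (Int.cast : ℤ → ℚ)) * ρ (inv w) =
      (ρ w)ᵀ * (B.map (Int.cast : ℤ → ℚ)) := by
    intro w
    have h2 : (G : ℚ) • ((B.map (Int.cast : ℤ → ℚ)) * ρ (inv w)) =
        (G : ℚ) • ((ρ w)ᵀ * (B.map (Int.cast : ℤ → ℚ))) := by
      rw [← Matrix.smul_mul, hBqP, hintq w, ← Matrix.mul_smul, hBqP]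
    exact smul_right_injective _ hGqne h2
  -- integer Schur relations
  have hschurZ : ∀ s t u v : Fin d,
      ∑ w : W, n w s t * n (inv w) u v = if s = v ∧ t = u then f else 0 := by
    intro s t u v
    have hq := hschur s t u v
    simp only [hn] at hq
    apply (Int.cast_injective (α := ℚ))
    push_cast
    rw [hq]
  -- integer intertwiner, entrywise
  have hBintZ : ∀ (w : W) (i j : Fin d),
      ∑ k, B i k * n (inv w) k j = ∑ k, n w k i * B k j := by
    intro w i j
    have h3 : ((B.map (Int.cast : ℤ → ℚ)) * ρ (inv w)) i j =
        ((ρ w)ᵀ * (B.map (Int.cast : ℤ → ℚ))) i j := by rw [hBintQ w]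
    simp only [Matrix.mul_apply, Matrix.map_apply, Matrix.transpose_apply] at h3
    apply (Int.cast_injective (α := ℚ))
    push_cast
    simpa only [hn] using h3
  refine ⟨B, ?_, ?_, hBintQ, ?_⟩
  · -- symmetry
    ext i j
    show B j i = B i j
    simp only [hB, Matrix.of_apply]
    rw [hPsymm j i]
  · -- positive definiteness
    intro v hv
    have h1 := hpos v hv
    rw [← hBqP, Matrix.smul_mulVec, dotProduct_smul, smul_eq_mul] at h1
    nlinarith [h1, hGq]
  · -- primes dividing det B divide f
    intro p hp hpdet
    by_contra hpf
    haveI : Fact p.Prime := ⟨hp⟩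
    have hfP : (f : ZMod p) ≠ 0 := fun h0 =>
      hpf ((ZMod.intCast_zmod_eq_zero_iff_dvd f p).mp h0)
    -- mod p Schur relations
    have hschurP : ∀ s t u v : Fin d,
        ∑ w : W, ((n w s t : ZMod p)) * ((n (inv w) u v : ZMod p)) =
          if s = v ∧ t = u then (f : ZMod p) else 0 := by
      intro s t u v
      have := congrArg (fun x : ℤ => (x : ZMod p)) (hschurZ s t u v)
      push_cast at this
      exact this
    -- mod p intertwiner
    have hBintP : ∀ (w : W) (i j : Fin d),
        ∑ k, (B i k : ZMod p) * (n (inv w) k j : ZMod p)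
          = ∑ k, (n w k i : ZMod p) * (B k j : ZMod p) := by
      intro w i j
      have := congrArg (fun x : ℤ => (x : ZMod p)) (hBintZ w i j)
      push_cast at this
      exact this
    -- a nonzero kernel vector mod p
    have hdet0 : (B.map (Int.cast : ℤ → ZMod p)).det = 0 := by
      have h4 : ((B.det : ℤ) : ZMod p) = 0 := (ZMod.intCast_zmod_eq_zero_iff_dvd _ p).mpr hpdet
      have h5 := RingHom.map_det (Int.castRingHom (ZMod p)) B
      simp only [RingHom.mapMatrix_apply, Int.coe_castRingHom] at h5
      rw [← h5]
      exact h4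
    obtain ⟨v, hv, hvker⟩ := (Matrix.exists_mulVec_eq_zero_iff).mpr hdet0
    obtain ⟨s0, hs0⟩ := Function.ne_iff.mp hv
    have hvker' : ∀ i, ∑ j, (B i j : ZMod p) * v j = 0 := by
      intro i
      have := congrFun hvker i
      simpa [Matrix.mulVec, dotProduct, Matrix.map_apply] using this
    -- the kernel is invariant, hence B vanishes mod p
    have hstep : ∀ (w : W) (i : Fin d),
        ∑ j, (B i j : ZMod p) * (∑ k, (n (inv w) j k : ZMod p) * v k) = 0 := by
      intro w i
      calc ∑ j, (B i j : ZMod p) * (∑ k, (n (inv w) j k : ZMod p) * v k)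
          = ∑ k, (∑ j, (B i j : ZMod p) * (n (inv w) j k : ZMod p)) * v k := by
            simp only [Finset.mul_sum, Finset.sum_mul, mul_assoc]
            exact Finset.sum_comm
        _ = ∑ k, (∑ j, (n w j i : ZMod p) * (B j k : ZMod p)) * v k :=
            Finset.sum_congr rfl fun k _ => by rw [hBintP w i k]
        _ = ∑ j, (n w j i : ZMod p) * (∑ k, (B j k : ZMod p) * v k) := by
            simp only [Finset.mul_sum, Finset.sum_mul, mul_assoc]
            exact Finset.sum_comm
        _ = 0 := Finset.sum_eq_zero fun j _ => by rw [hvker' j, mul_zero]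
    have hB0 : ∀ i t : Fin d, (B i t : ZMod p) = 0 := by
      intro i t
      have hc : (B i t : ZMod p) * ((f : ZMod p) * v s0) = 0 := by
        calc (B i t : ZMod p) * ((f : ZMod p) * v s0)
            = ∑ j, (B i j : ZMod p) * (if t = j then (f : ZMod p) * v s0 else 0) := by
              simp
          _ = ∑ j, (B i j : ZMod p) *
                (∑ k, (if s0 = k ∧ t = j then (f : ZMod p) else 0) * v k) := by
              refine Finset.sum_congr rfl fun j _ => ?_
              congr 1
              by_cases hj : t = j
              · simp [hj, ite_mul, mul_comm]
              · simp [hj]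
          _ = ∑ j, (B i j : ZMod p) *
                (∑ k, (∑ w : W, (n w s0 t : ZMod p) * (n (inv w) j k : ZMod p)) * v k) := by
              refine Finset.sum_congr rfl fun j _ => ?_
              congr 1
              refine Finset.sum_congr rfl fun k _ => ?_
              rw [hschurP s0 t j k]
          _ = ∑ w : W, (n w s0 t : ZMod p) *
                (∑ j, (B i j : ZMod p) * (∑ k, (n (inv w) j k : ZMod p) * v k)) :=
              auxGeck_swap _ _ _ _
          _ = 0 := Finset.sum_eq_zero fun w _ => by rw [hstep w i, mul_zero]
      have hne : (f : ZMod p) * v s0 ≠ 0 := mul_ne_zero hfP hs0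
      exact (mul_eq_zero.mp hc).resolve_right hne
    -- contradiction with gcd normalization
    have hpB : ∀ i j, (p : ℤ) ∣ B i j := by
      intro i j
      exact (ZMod.intCast_zmod_eq_zero_iff_dvd _ p).mp (hB0 i j)
    have hGp : G * (p : ℤ) ∣ g := by
      refine Finset.dvd_gcd fun q _ => ?_
      rw [← hGB q.1 q.2]
      exact mul_dvd_mul_left G (hpB q.1 q.2)
    have hGp' : G * (p : ℤ) ∣ G * 1 := by
      rw [mul_one, hG]
      exact (dvd_abs _ _).mpr hGp
    have hp1 : (p : ℤ) ∣ 1 := (mul_dvd_mul_iff_left hGne).mp hGp'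
    have := Int.le_of_dvd one_pos hp1
    have h2le : (2 : ℤ) ≤ (p : ℤ) := by exact_mod_cast hp.two_le
    omega
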